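/- Let N ≥ 2 be an integer, z ∈ ℂ, and y ∈ ℝ with y ≠ 0. If P_{N,z}(y) = 0, then the vector φ ∈ ℂ^N defined by φ_n = (z/y)·T_{n−1}(y) + (1 − z/y)·U_{n−1}(y) for n = 1, …, N satisfies φ_1 = 1 (in particular φ ≠ 0) and M^{(N)}(y,z)·φ = 0. -/

import Mathlib

open Matrix

/-- Chebyshev polynomials of the first kind (as functions on ℂ). -/
noncomputable def chebT : ℕ → ℂ → ℂ
  | 0, _ => 1
  | 1, y => y
  | n + 2, y => 2 * y * chebT (n + 1) y - chebT n y

/-- Chebyshev polynomials of the second kind (as functions on ℂ). -/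
noncomputable def chebU : ℕ → ℂ → ℂ
  | 0, _ => 1
  | 1, y => 2 * y
  | n + 2, y => 2 * y * chebU (n + 1) y - chebU n y

/-- The N×N tridiagonal matrix `M^{(N)}(y,z)` with diagonal
`(2y−z, 2y, …, 2y, 2y−conj z)` and `−1` on the subdiagonal and superdiagonal. -/
noncomputable def Mmat (N : ℕ) (y z : ℂ) : Matrix (Fin N) (Fin N) ℂ :=
  Matrix.of fun j k =>
    if (j : ℕ) = (k : ℕ) then
      (if (j : ℕ) = 0 then 2 * y - z
       else if (j : ℕ) = N - 1 then 2 * y - starRingEnd ℂ z else 2 * y)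
    else if (j : ℕ) + 1 = (k : ℕ) ∨ (k : ℕ) + 1 = (j : ℕ) then -1 else 0

/-- The secular polynomial `P_{N,z}(y) = z·conj z·U_{N−2}(y) − (z+conj z)·U_{N−1}(y) + U_N(y)`. -/
noncomputable def Psec (N : ℕ) (z y : ℂ) : ℂ :=
  z * starRingEnd ℂ z * chebU (N - 2) y
    - (z + starRingEnd ℂ z) * chebU (N - 1) y + chebU N y

lemma phi_key (y z : ℂ) (hy : y ≠ 0) (n : ℕ) :
    (z / y) * chebT (n + 1) y + (1 - z / y) * chebU (n + 1) y
      = chebU (n + 1) y - z * chebU n y := by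
  induction n using Nat.twoStepInduction with
  | zero => simp only [chebT, chebU]; field_simp; ring
  | one => simp only [chebT, chebU]; field_simp; ring
  | more n ih1 ih2 =>
      simp only [chebT, chebU] at ih1 ih2 ⊢
      linear_combination 2 * y * ih2 - ih1

lemma sum_two {n : ℕ} (f : Fin n → ℂ) (a b : Fin n) (hab : a ≠ b)
    (h0 : ∀ k, k ≠ a → k ≠ b → f k = 0) : ∑ k, f k = f a + f b := by
  rw [← Finset.sum_pair hab]
  refine (Finset.sum_subset (Finset.subset_univ _) fun x _ hx => ?_).symm
  simp only [Finset.mem_insert, Finset.mem_singleton, not_or] at hx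
  exact h0 x hx.1 hx.2

lemma sum_three {n : ℕ} (f : Fin n → ℂ) (a b c : Fin n)
    (hab : a ≠ b) (hac : a ≠ c) (hbc : b ≠ c)
    (h0 : ∀ k, k ≠ a → k ≠ b → k ≠ c → f k = 0) : ∑ k, f k = f a + f b + f c := by
  have : ∑ k ∈ ({a, b, c} : Finset (Fin n)), f k = f a + (f b + f c) := by
    rw [Finset.sum_insert (by simp [hab, hac]), Finset.sum_pair hbc]
  rw [← add_assoc] at this
  rw [← this]
  refine (Finset.sum_subset (Finset.subset_univ _) fun x _ hx => ?_).symm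
  simp only [Finset.mem_insert, Finset.mem_singleton, not_or] at hx
  exact h0 x hx.1 hx.2.1 hx.2.2

/-- If `y ∈ ℝ`, `y ≠ 0`, is a root of the secular polynomial `P_{N,z}`, then the vector
`φ_n = (z/y)·T_{n−1}(y) + (1 − z/y)·U_{n−1}(y)` (here 0-based: the n-th entry uses `T_n`, `U_n`)
satisfies `φ_1 = 1` (in particular `φ ≠ 0`) and `M^{(N)}(y,z)·φ = 0`. -/
theorem stmt6 (N : ℕ) (hN : 2 ≤ N) (z : ℂ) (y : ℝ) (hy : y ≠ 0)
    (hroot : Psec N z (y : ℂ) = 0) :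
    let φ : Fin N → ℂ := fun n =>
      (z / (y : ℂ)) * chebT (n : ℕ) (y : ℂ) + (1 - z / (y : ℂ)) * chebU (n : ℕ) (y : ℂ)
    φ ⟨0, by omega⟩ = 1 ∧ φ ≠ 0 ∧ Mmat N (y : ℂ) z *ᵥ φ = 0 := by
  intro φ
  obtain ⟨m, rfl⟩ : ∃ m, N = m + 2 := ⟨N - 2, by omega⟩
  have hyc : (y : ℂ) ≠ 0 := Complex.ofReal_ne_zero.2 hy
  set w : ℂ := (y : ℂ) with hw
  have h0 : φ ⟨0, by omega⟩ = 1 := by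
    show (z / w) * chebT 0 w + (1 - z / w) * chebU 0 w = 1
    simp only [chebT, chebU]; field_simp; ring
  refine ⟨h0, ?_, ?_⟩
  · intro h
    rw [h] at h0
    rw [Pi.zero_apply] at h0
    exact zero_ne_one h0
  · -- φ as a function of the index value
    have hφ : ∀ (i : ℕ) (hi : i < m + 2),
        φ ⟨i, hi⟩ = (z / w) * chebT i w + (1 - z / w) * chebU i w := fun i hi => rfl
    funext j
    rcases j with ⟨i, hi⟩
    show (∑ k, Mmat (m + 2) w z ⟨i, hi⟩ k * φ k) = 0
    rcases Nat.eq_zero_or_pos i with rfl | hipos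
    · -- first row: entries at k = 0, 1
      rw [sum_two _ ⟨0, by omega⟩ ⟨1, by omega⟩ (Fin.ne_of_val_ne (by simp only [Fin.val_mk]; omega))
          (fun k hk0 hk1 => ?_)]
      · have e0 : Mmat (m + 2) w z ⟨0, by omega⟩ ⟨0, by omega⟩ = 2 * w - z := by
          simp only [Mmat, Matrix.of_apply, Fin.val_mk]
          split_ifs <;> first | rfl | omega | tauto
        have e1 : Mmat (m + 2) w z ⟨0, by omega⟩ ⟨1, by omega⟩ = -1 := by
          simp only [Mmat, Matrix.of_apply, Fin.val_mk]
          split_ifs <;> first | rfl | omega | tauto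
        rw [e0, e1, h0, hφ 1 (by omega)]
        simp only [chebT, chebU]
        field_simp
        ring
      · have hk0' : (k : ℕ) ≠ 0 := fun h => hk0 (Fin.ext h)
        have hk1' : (k : ℕ) ≠ 1 := fun h => hk1 (Fin.ext h)
        have : Mmat (m + 2) w z ⟨0, by omega⟩ k = 0 := by
          simp only [Mmat, Matrix.of_apply, Fin.val_mk]
          split_ifs <;> first | rfl | omega | tauto
        rw [this, zero_mul]
    · rcases Nat.lt_or_ge i (m + 1) with hmid | hlast
      · -- middle row: entries at i-1, i, i+1
        obtain ⟨l, rfl⟩ : ∃ l, i = l + 1 := ⟨i - 1, by omega⟩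
        rw [sum_three _ ⟨l, by omega⟩ ⟨l + 1, by omega⟩ ⟨l + 2, by omega⟩
            (Fin.ne_of_val_ne (by simp only [Fin.val_mk]; omega)) (Fin.ne_of_val_ne (by simp only [Fin.val_mk]; omega)) (Fin.ne_of_val_ne (by simp only [Fin.val_mk]; omega))
            (fun k hk0 hk1 hk2 => ?_)]
        · have e0 : Mmat (m + 2) w z ⟨l + 1, hi⟩ ⟨l, by omega⟩ = -1 := by
            simp only [Mmat, Matrix.of_apply, Fin.val_mk]
            split_ifs <;> first | rfl | omega | tauto
          have e1 : Mmat (m + 2) w z ⟨l + 1, hi⟩ ⟨l + 1, by omega⟩ = 2 * w := by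
            simp only [Mmat, Matrix.of_apply, Fin.val_mk]
            split_ifs <;> first | rfl | omega | tauto
          have e2 : Mmat (m + 2) w z ⟨l + 1, hi⟩ ⟨l + 2, by omega⟩ = -1 := by
            simp only [Mmat, Matrix.of_apply, Fin.val_mk]
            split_ifs <;> first | rfl | omega | tauto
          rw [e0, e1, e2, hφ l (by omega), hφ (l + 1) (by omega), hφ (l + 2) (by omega)]
          simp only [chebT, chebU]
          ring
        · have hk0' : (k : ℕ) ≠ l := fun h => hk0 (Fin.ext h)
          have hk1' : (k : ℕ) ≠ l + 1 := fun h => hk1 (Fin.ext h)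
          have hk2' : (k : ℕ) ≠ l + 2 := fun h => hk2 (Fin.ext h)
          have : Mmat (m + 2) w z ⟨l + 1, hi⟩ k = 0 := by
            simp only [Mmat, Matrix.of_apply, Fin.val_mk]
            split_ifs <;> first | rfl | omega | tauto
          rw [this, zero_mul]
      · -- last row: i = m + 1
        have him : i = m + 1 := by omega
        subst him
        rw [sum_two _ ⟨m, by omega⟩ ⟨m + 1, by omega⟩ (Fin.ne_of_val_ne (by simp only [Fin.val_mk]; omega))
            (fun k hk0 hk1 => ?_)]
        · have e0 : Mmat (m + 2) w z ⟨m + 1, hi⟩ ⟨m, by omega⟩ = -1 := by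
            simp only [Mmat, Matrix.of_apply, Fin.val_mk]
            split_ifs <;> first | rfl | omega | tauto
          have e1 : Mmat (m + 2) w z ⟨m + 1, hi⟩ ⟨m + 1, by omega⟩
              = 2 * w - starRingEnd ℂ z := by
            simp only [Mmat, Matrix.of_apply, Fin.val_mk]
            split_ifs <;> first | rfl | omega | tauto
          rw [e0, e1]
          have k1 : φ ⟨m + 1, by omega⟩ = chebU (m + 1) w - z * chebU m w := by
            rw [hφ (m + 1) (by omega)]; exact phi_key w z hyc m
          have k0 : 2 * w * φ ⟨m + 1, by omega⟩ - φ ⟨m, by omega⟩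
              = chebU (m + 2) w - z * chebU (m + 1) w := by
            have := phi_key w z hyc (m + 1)
            rw [hφ (m + 1) (by omega), hφ m (by omega)]
            simp only [chebT, chebU] at this
            simp only [chebU]
            linear_combination this
          have hroot' : z * starRingEnd ℂ z * chebU m w
              - (z + starRingEnd ℂ z) * chebU (m + 1) w + chebU (m + 2) w = 0 := by
            have := hroot
            simp only [Psec, Nat.add_sub_cancel, show m + 2 - 1 = m + 1 from rfl] at this
            exact this
          linear_combination k0 - starRingEnd ℂ z * k1 + hroot'
        · have hk0' : (k : ℕ) ≠ m := fun h => hk0 (Fin.ext h)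
          have hk1' : (k : ℕ) ≠ m + 1 := fun h => hk1 (Fin.ext h)
          have : Mmat (m + 2) w z ⟨m + 1, hi⟩ k = 0 := by
            simp only [Mmat, Matrix.of_apply, Fin.val_mk]
            split_ifs <;> first | rfl | omega | tauto
          rw [this, zero_mul]
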